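/- For any dimension d ≥ 1 there exists ε > 0 such that for every a > 0, there do not exist d+2 points x_1,…,x_{d+2} in ℝ^d with a(1-ε) ≤ ‖x_i - x_j‖ ≤ a(1+ε) for all 1 ≤ i < j ≤ d+2. -/

import Mathlib

set_option maxHeartbeats 1000000 in
theorem no_equidistant_configuration (d : ℕ) (hd : 1 ≤ d) :
    ∃ ε : ℝ, 0 < ε ∧ ∀ a : ℝ, 0 < a →
      ¬ ∃ x : Fin (d + 2) → EuclideanSpace ℝ (Fin d),
          ∀ i j : Fin (d + 2), i ≠ j →
            a * (1 - ε) ≤ ‖x i - x j‖ ∧ ‖x i - x j‖ ≤ a * (1 + ε) := by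
  set ε : ℝ := 1 / (4 * (d + 2)) with hεdef
  have hε0 : 0 < ε := by positivity
  have hε1 : ε ≤ 1 := by
    rw [hεdef]
    rw [div_le_one (by positivity)]
    nlinarith [Nat.cast_nonneg (α := ℝ) d]
  refine ⟨ε, hε0, ?_⟩
  rintro a ha ⟨x, hx⟩
  -- affine dependence
  have hnotind : ¬ AffineIndependent ℝ x := by
    intro h
    have h1 := h.card_le_finrank_succ
    have h2 : Module.finrank ℝ (vectorSpan ℝ (Set.range x)) ≤ d := by
      have := Submodule.finrank_le (vectorSpan ℝ (Set.range x))
      simpa [finrank_euclideanSpace] using this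
    simp [Fintype.card_fin] at h1
    omega
  rw [affineIndependent_iff] at hnotind
  push_neg at hnotind
  obtain ⟨s, w, hw0, hvsub, i0, hi0s, hi0⟩ := hnotind
  -- basic sums
  have h1 : ∑ i ∈ s, ∑ j ∈ s, w i * w j * ‖x i‖ ^ 2 = 0 := by
    have : ∀ i ∈ s, ∑ j ∈ s, w i * w j * ‖x i‖ ^ 2 = (w i * ‖x i‖ ^ 2) * ∑ j ∈ s, w j := by
      intro i _
      rw [Finset.mul_sum]
      exact Finset.sum_congr rfl fun j _ => by ring
    rw [Finset.sum_congr rfl this]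
    simp [hw0]
  have h1' : ∑ i ∈ s, ∑ j ∈ s, w i * w j * ‖x j‖ ^ 2 = 0 := by
    rw [Finset.sum_comm]
    rw [← h1]
    exact Finset.sum_congr rfl fun j _ => Finset.sum_congr rfl fun i _ => by ring
  have h2 : ∑ i ∈ s, ∑ j ∈ s, w i * w j * (inner ℝ (x i) (x j) : ℝ) = 0 := by
    have key : (inner ℝ (∑ i ∈ s, w i • x i) (∑ j ∈ s, w j • x j) : ℝ)
        = ∑ i ∈ s, ∑ j ∈ s, w i * w j * (inner ℝ (x i) (x j) : ℝ) := by
      rw [sum_inner]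
      refine Finset.sum_congr rfl fun i _ => ?_
      rw [inner_sum]
      refine Finset.sum_congr rfl fun j _ => ?_
      rw [real_inner_smul_left, real_inner_smul_right]
      ring
    rw [hvsub] at key
    simpa using key.symm
  have hzero : ∑ i ∈ s, ∑ j ∈ s, w i * w j * ‖x i - x j‖ ^ 2 = 0 := by
    have expand : ∀ i ∈ s, ∀ j ∈ s, w i * w j * ‖x i - x j‖ ^ 2
        = w i * w j * ‖x i‖ ^ 2 - 2 * (w i * w j * (inner ℝ (x i) (x j) : ℝ))
          + w i * w j * ‖x j‖ ^ 2 := by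
      intro i _ j _
      rw [norm_sub_sq_real]
      ring
    calc ∑ i ∈ s, ∑ j ∈ s, w i * w j * ‖x i - x j‖ ^ 2
        = ∑ i ∈ s, ∑ j ∈ s, (w i * w j * ‖x i‖ ^ 2
            - 2 * (w i * w j * (inner ℝ (x i) (x j) : ℝ)) + w i * w j * ‖x j‖ ^ 2) :=
          Finset.sum_congr rfl fun i hi => Finset.sum_congr rfl fun j hj =>
            expand i hi j hj
      _ = (∑ i ∈ s, ∑ j ∈ s, w i * w j * ‖x i‖ ^ 2)
            - 2 * (∑ i ∈ s, ∑ j ∈ s, w i * w j * (inner ℝ (x i) (x j) : ℝ))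
            + ∑ i ∈ s, ∑ j ∈ s, w i * w j * ‖x j‖ ^ 2 := by
          simp [Finset.sum_add_distrib, Finset.sum_sub_distrib, Finset.mul_sum]
      _ = 0 := by rw [h1, h1', h2]; ring
  -- sum of the constant a^2 term
  have hconst : ∑ i ∈ s, ∑ j ∈ s, w i * w j * a ^ 2 = 0 := by
    have : ∀ i ∈ s, ∑ j ∈ s, w i * w j * a ^ 2 = (w i * a ^ 2) * ∑ j ∈ s, w j := by
      intro i _
      rw [Finset.mul_sum]
      exact Finset.sum_congr rfl fun j _ => by ring
    rw [Finset.sum_congr rfl this]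
    simp [hw0]
  have hE : ∑ i ∈ s, ∑ j ∈ s, w i * w j * (‖x i - x j‖ ^ 2 - a ^ 2) = 0 := by
    have : ∀ i ∈ s, ∀ j ∈ s, w i * w j * (‖x i - x j‖ ^ 2 - a ^ 2)
        = w i * w j * ‖x i - x j‖ ^ 2 - w i * w j * a ^ 2 := fun i _ j _ => by ring
    calc ∑ i ∈ s, ∑ j ∈ s, w i * w j * (‖x i - x j‖ ^ 2 - a ^ 2)
        = ∑ i ∈ s, ∑ j ∈ s, (w i * w j * ‖x i - x j‖ ^ 2 - w i * w j * a ^ 2) :=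
          Finset.sum_congr rfl fun i hi => Finset.sum_congr rfl fun j hj => this i hi j hj
      _ = 0 := by simp [Finset.sum_sub_distrib, hzero, hconst]
  -- split diagonal
  have hsplit : ∀ i ∈ s, ∑ j ∈ s, w i * w j * (‖x i - x j‖ ^ 2 - a ^ 2)
      = -(w i ^ 2 * a ^ 2) + ∑ j ∈ s.erase i, w i * w j * (‖x i - x j‖ ^ 2 - a ^ 2) := by
    intro i hi
    rw [← Finset.add_sum_erase _ _ hi]
    congr 1
    rw [sub_self, norm_zero]
    ring
  have hoffdiag : ∑ i ∈ s, ∑ j ∈ s.erase i, w i * w j * (‖x i - x j‖ ^ 2 - a ^ 2)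
      = a ^ 2 * ∑ i ∈ s, w i ^ 2 := by
    have := hE
    rw [Finset.sum_congr rfl hsplit, Finset.sum_add_distrib] at this
    have hms : ∑ i ∈ s, w i ^ 2 * a ^ 2 = a ^ 2 * ∑ i ∈ s, w i ^ 2 := by
      rw [Finset.mul_sum]
      exact Finset.sum_congr rfl fun i _ => by ring
    rw [Finset.sum_neg_distrib, hms] at this
    linarith
  have hS : 0 < ∑ i ∈ s, w i ^ 2 := by
    apply Finset.sum_pos' (fun i _ => sq_nonneg (w i))
    exact ⟨i0, hi0s, by positivity⟩
  -- bound each off-diagonal term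
  have hbound : ∀ i j : Fin (d + 2), i ≠ j →
      |‖x i - x j‖ ^ 2 - a ^ 2| ≤ 3 * ε * a ^ 2 := by
    intro i j hij
    obtain ⟨hl, hu⟩ := hx i j hij
    have hn : (0:ℝ) ≤ ‖x i - x j‖ := norm_nonneg _
    rw [abs_le]
    have hp0 : 0 ≤ a * (1 - ε) := by nlinarith
    have q1 : (a * (1 - ε)) * (a * (1 - ε)) ≤ ‖x i - x j‖ * ‖x i - x j‖ :=
      mul_self_le_mul_self hp0 hl
    have q2 : ‖x i - x j‖ * ‖x i - x j‖ ≤ (a * (1 + ε)) * (a * (1 + ε)) :=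
      mul_self_le_mul_self hn hu
    constructor <;> nlinarith [sq_nonneg (a * ε), mul_pos ha ha, mul_pos ha hε0,
      mul_pos (mul_pos ha ha) hε0]
  -- bound the off-diagonal sum
  have hcard : (s.card : ℝ) ≤ (d : ℝ) + 2 := by
    have := Finset.card_le_univ s
    simp [Fintype.card_fin] at this
    exact_mod_cast this
  have habs : a ^ 2 * ∑ i ∈ s, w i ^ 2
      ≤ 3 * ε * a ^ 2 * ((d : ℝ) + 2) * ∑ i ∈ s, w i ^ 2 := by
    rw [← hoffdiag]
    calc ∑ i ∈ s, ∑ j ∈ s.erase i, w i * w j * (‖x i - x j‖ ^ 2 - a ^ 2)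
        ≤ ∑ i ∈ s, ∑ j ∈ s.erase i, |w i| * |w j| * (3 * ε * a ^ 2) := by
          refine Finset.sum_le_sum fun i _ => Finset.sum_le_sum fun j hj => ?_
          have hij : i ≠ j := (Finset.ne_of_mem_erase hj).symm
          calc w i * w j * (‖x i - x j‖ ^ 2 - a ^ 2)
              ≤ |w i * w j * (‖x i - x j‖ ^ 2 - a ^ 2)| := le_abs_self _
            _ = |w i| * |w j| * |‖x i - x j‖ ^ 2 - a ^ 2| := by
                rw [abs_mul, abs_mul]
            _ ≤ |w i| * |w j| * (3 * ε * a ^ 2) := by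
                apply mul_le_mul_of_nonneg_left (hbound i j hij) (by positivity)
      _ ≤ ∑ i ∈ s, ∑ j ∈ s, |w i| * |w j| * (3 * ε * a ^ 2) := by
          refine Finset.sum_le_sum fun i hi => ?_
          apply Finset.sum_le_sum_of_subset_of_nonneg (Finset.erase_subset i s)
          intro j _ _
          positivity
      _ = (3 * ε * a ^ 2) * ((∑ i ∈ s, |w i|) * (∑ i ∈ s, |w i|)) := by
          rw [Finset.sum_mul_sum, Finset.mul_sum]
          refine Finset.sum_congr rfl fun i _ => ?_
          rw [Finset.mul_sum]
          exact Finset.sum_congr rfl fun j _ => by ring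
      _ ≤ (3 * ε * a ^ 2) * ((s.card : ℝ) * ∑ i ∈ s, |w i| ^ 2) := by
          apply mul_le_mul_of_nonneg_left _ (by positivity)
          have := sq_sum_le_card_mul_sum_sq (s := s) (f := fun i => |w i|)
          rw [sq] at this
          exact this
      _ ≤ 3 * ε * a ^ 2 * ((d : ℝ) + 2) * ∑ i ∈ s, w i ^ 2 := by
          have : ∑ i ∈ s, |w i| ^ 2 = ∑ i ∈ s, w i ^ 2 :=
            Finset.sum_congr rfl fun i _ => sq_abs _
          rw [this]
          have h3 : (0:ℝ) ≤ 3 * ε * a ^ 2 * ∑ i ∈ s, w i ^ 2 := by positivity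
          calc (3 * ε * a ^ 2) * ((s.card : ℝ) * ∑ i ∈ s, w i ^ 2)
              = (3 * ε * a ^ 2 * ∑ i ∈ s, w i ^ 2) * (s.card : ℝ) := by ring
            _ ≤ (3 * ε * a ^ 2 * ∑ i ∈ s, w i ^ 2) * ((d : ℝ) + 2) :=
                mul_le_mul_of_nonneg_left hcard h3
            _ = 3 * ε * a ^ 2 * ((d : ℝ) + 2) * ∑ i ∈ s, w i ^ 2 := by ring
  -- derive contradiction: 3 * ε * (d+2) = 3/4 < 1
  have hεval : 3 * ε * ((d : ℝ) + 2) = 3 / 4 := by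
    rw [hεdef]
    field_simp
  nlinarith [mul_pos (mul_pos ha ha) hS, habs, hεval]
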